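/- arXiv:2306.06481 — 2 statements merged into one kernel-verified Lean document; each statement's English description precedes it below -/
import Mathlib

section
/- Let 0 ≤ ε < 1, let V be a linear subspace of ℝⁿ and S ∈ ℝ^{s×n}. Then the following are equivalent: (i) (1−ε)‖v‖² ≤ ‖Sv‖² ≤ (1+ε)‖v‖² for all v ∈ V; (ii) for all u, v ∈ V, ⟨u,v⟩ − ε‖u‖·‖v‖ ≤ ⟨Su, Sv⟩ ≤ ⟨u,v⟩ + ε‖u‖·‖v‖, where ⟨·,·⟩ is the Euclidean inner product. -/
open Matrix

/-- Euclidean norm of a vector in `ℝ^m`. -/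
noncomputable def eunorm {m : ℕ} (v : Fin m → ℝ) : ℝ := Real.sqrt (∑ i, (v i) ^ 2)

lemma eunorm_nonneg {m : ℕ} (v : Fin m → ℝ) : 0 ≤ eunorm v := Real.sqrt_nonneg _

lemma eunorm_sq {m : ℕ} (v : Fin m → ℝ) : eunorm v ^ 2 = dotProduct v v := by
  rw [eunorm, Real.sq_sqrt (by positivity)]
  simp [dotProduct, sq]

lemma eunorm_eq_zero {m : ℕ} {v : Fin m → ℝ} (h : eunorm v = 0) : v = 0 := by
  have h1 : eunorm v ^ 2 = 0 := by rw [h]; ring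
  rw [eunorm, Real.sq_sqrt (by positivity)] at h1
  funext i
  have := (Finset.sum_eq_zero_iff_of_nonneg (fun i _ => sq_nonneg (v i))).mp h1 i
    (Finset.mem_univ i)
  exact (pow_eq_zero_iff two_ne_zero).mp this

lemma eunorm_zero {m : ℕ} : eunorm (0 : Fin m → ℝ) = 0 := by simp [eunorm]

lemma eunorm_neg {m : ℕ} (v : Fin m → ℝ) : eunorm (-v) = eunorm v := by
  simp [eunorm]

lemma upper_bound
    {n s : ℕ} {ε : ℝ} (hε0 : 0 ≤ ε)
    (V : Submodule ℝ (Fin n → ℝ)) (S : Matrix (Fin s) (Fin n) ℝ)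
    (h : ∀ v ∈ V,
      (1 - ε) * eunorm v ^ 2 ≤ eunorm (S.mulVec v) ^ 2 ∧
        eunorm (S.mulVec v) ^ 2 ≤ (1 + ε) * eunorm v ^ 2)
    {u v : Fin n → ℝ} (hu : u ∈ V) (hv : v ∈ V) :
    dotProduct (S.mulVec u) (S.mulVec v) ≤
      dotProduct u v + ε * eunorm u * eunorm v := by
  set a := eunorm u with ha
  set b := eunorm v with hb
  have ha0 : 0 ≤ a := eunorm_nonneg u
  have hb0 : 0 ≤ b := eunorm_nonneg v
  rcases eq_or_lt_of_le ha0 with ha' | ha'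
  · have hu0 : u = 0 := eunorm_eq_zero ha'.symm
    subst hu0
    simp [Matrix.mulVec_zero, ← ha', eunorm_zero]
  rcases eq_or_lt_of_le hb0 with hb' | hb'
  · have hv0 : v = 0 := eunorm_eq_zero hb'.symm
    subst hv0
    simp [Matrix.mulVec_zero, ← hb', eunorm_zero]
  have hu2 : dotProduct u u = a ^ 2 := (eunorm_sq u).symm
  have hv2 : dotProduct v v = b ^ 2 := (eunorm_sq v).symm
  have mem1 : b • u + a • v ∈ V := V.add_mem (V.smul_mem _ hu) (V.smul_mem _ hv)
  have mem2 : b • u - a • v ∈ V := V.sub_mem (V.smul_mem _ hu) (V.smul_mem _ hv)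
  obtain ⟨_, h1⟩ := h _ mem1
  obtain ⟨h2, _⟩ := h _ mem2
  rw [eunorm_sq, eunorm_sq] at h1 h2
  have c1 : dotProduct v u = dotProduct u v := dotProduct_comm v u
  have c2 : dotProduct (S.mulVec v) (S.mulVec u)
      = dotProduct (S.mulVec u) (S.mulVec v) := dotProduct_comm _ _
  simp only [Matrix.mulVec_add, Matrix.mulVec_sub, Matrix.mulVec_smul,
    dotProduct_add, add_dotProduct, dotProduct_sub,
    sub_dotProduct, dotProduct_smul, smul_dotProduct,
    smul_eq_mul, c1, c2] at h1 h2
  rw [hu2, hv2] at h1 h2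
  have key : a * b * dotProduct (S.mulVec u) (S.mulVec v) ≤
      a * b * dotProduct u v + ε * a ^ 2 * b ^ 2 := by
    nlinarith [h1, h2]
  nlinarith [key, mul_pos ha' hb']

/-- Equivalence of the norm formulation (2) and the inner-product formulation (3)
of the `ε`-subspace-embedding property on a subspace `V ⊆ ℝⁿ`. -/
theorem embedding_iff_inner_product
    {n s : ℕ} {ε : ℝ} (hε0 : 0 ≤ ε) (hε1 : ε < 1)
    (V : Submodule ℝ (Fin n → ℝ)) (S : Matrix (Fin s) (Fin n) ℝ) :
    (∀ v ∈ V,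
      (1 - ε) * eunorm v ^ 2 ≤ eunorm (S.mulVec v) ^ 2 ∧
        eunorm (S.mulVec v) ^ 2 ≤ (1 + ε) * eunorm v ^ 2) ↔
    (∀ u ∈ V, ∀ v ∈ V,
      dotProduct u v - ε * eunorm u * eunorm v ≤
          dotProduct (S.mulVec u) (S.mulVec v) ∧
        dotProduct (S.mulVec u) (S.mulVec v) ≤
          dotProduct u v + ε * eunorm u * eunorm v) := by
  constructor
  · intro h u hu v hv
    refine ⟨?_, upper_bound hε0 V S h hu hv⟩
    have := upper_bound hε0 V S h (V.neg_mem hu) hv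
    rw [eunorm_neg] at this
    simp only [Matrix.mulVec_neg, neg_dotProduct] at this
    linarith
  · intro h v hv
    obtain ⟨h1, h2⟩ := h v hv v hv
    rw [eunorm_sq v, eunorm_sq (S.mulVec v)]
    constructor <;> nlinarith [eunorm_sq v, h1, h2]
end

section
/- Let U_d ∈ ℝ^{n×d}, b ∈ ℝⁿ, H_d ∈ ℂ^{d×d} and r ∈ ℂ^d, and assume H_d + r e_d^T is diagonalizable: H_d + r e_d^T = X Λ X^{-1}, Λ = diag(λ₁,…,λ_d), with α_i = e_d^T X e_i, β_i = e_i^T X^{-1} e₁. Then for every polynomial p ∈ ℂ[X], the sketched approximation f_d^sk := U_d p(H_d + r e_d^T) e₁ ‖b‖ and the truncated approximation f_d^tr := U_d p(H_d) e₁ ‖b‖ satisfy f_d^sk − f_d^tr = U_d (Σ_{i=1}^d α_i β_i · p[H_d, λ_i]) r · ‖b‖. -/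
open Matrix Polynomial

/-- The first-order divided-difference polynomial `p[·, λ] = (p - p(λ)) / (X - λ)`
(exact division in `ℂ[X]`). -/
noncomputable def divDiffPoly (p : Polynomial ℂ) (lam : ℂ) : Polynomial ℂ :=
  (p - Polynomial.C (p.eval lam)) / (Polynomial.X - Polynomial.C lam)


/-- Conjugation by a unit as an algebra hom. -/
noncomputable def conjAlgHom {m : Type*} [Fintype m] [DecidableEq m]
    (u : (Matrix m m ℂ)ˣ) : Matrix m m ℂ →ₐ[ℂ] Matrix m m ℂ where
  toFun M := ↑u * M * ↑u⁻¹
  map_one' := by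
    show (u : Matrix m m ℂ) * 1 * (↑u⁻¹ : Matrix m m ℂ) = 1
    rw [mul_one, u.mul_inv]
  map_mul' a b := by
    show (u : Matrix m m ℂ) * (a * b) * (↑u⁻¹ : Matrix m m ℂ)
      = ((u : Matrix m m ℂ) * a * (↑u⁻¹ : Matrix m m ℂ)) * ((u : Matrix m m ℂ) * b * (↑u⁻¹ : Matrix m m ℂ))
    have h : (↑u⁻¹ : Matrix m m ℂ) * (u : Matrix m m ℂ) = 1 := u.inv_mul
    rw [show ((u : Matrix m m ℂ) * a * ↑u⁻¹) * ((u : Matrix m m ℂ) * b * ↑u⁻¹)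
        = (u : Matrix m m ℂ) * a * (((↑u⁻¹ : Matrix m m ℂ) * (u : Matrix m m ℂ)) * (b * (↑u⁻¹ : Matrix m m ℂ))) from by
        noncomm_ring, h, one_mul]
    noncomm_ring
  map_zero' := by
    show (u : Matrix m m ℂ) * 0 * (↑u⁻¹ : Matrix m m ℂ) = 0
    simp
  map_add' a b := by
    show (u : Matrix m m ℂ) * (a + b) * (↑u⁻¹ : Matrix m m ℂ)
      = (u : Matrix m m ℂ) * a * (↑u⁻¹ : Matrix m m ℂ) + (u : Matrix m m ℂ) * b * (↑u⁻¹ : Matrix m m ℂ)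
    noncomm_ring
  commutes' c := by
    show (u : Matrix m m ℂ) * algebraMap ℂ (Matrix m m ℂ) c * (↑u⁻¹ : Matrix m m ℂ) = _
    simp only [Algebra.algebraMap_eq_smul_one]
    rw [mul_smul_comm, smul_mul_assoc, mul_one, u.mul_inv]

lemma conjAlgHom_apply {m : Type*} [Fintype m] [DecidableEq m]
    (u : (Matrix m m ℂ)ˣ) (M : Matrix m m ℂ) :
    conjAlgHom u M = (u : Matrix m m ℂ) * M * (↑u⁻¹ : Matrix m m ℂ) := rfl

lemma aeval_diag {m : Type*} [Fintype m] [DecidableEq m] (Λ : m → ℂ) (p : Polynomial ℂ) :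
    aeval (diagonal Λ) p = diagonal (fun i => p.eval (Λ i)) := by
  have h := aeval_algHom_apply (Matrix.diagonalAlgHom (n := m) (α := ℂ) ℂ) Λ p
  simp only [Matrix.diagonalAlgHom_apply] at h
  have hfun : (aeval Λ p : m → ℂ) = fun i => p.eval (Λ i) := by
    funext i
    have h2 := aeval_algHom_apply (Pi.evalAlgHom ℂ (fun _ : m => ℂ) i) Λ p
    simp only [Polynomial.coe_aeval_eq_eval, Pi.evalAlgHom_apply] at h2
    exact h2.symm
  rw [h, hfun]

lemma aeval_conj {m : Type*} [Fintype m] [DecidableEq m]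
    (u : (Matrix m m ℂ)ˣ) (D : Matrix m m ℂ) (p : Polynomial ℂ) :
    aeval ((u : Matrix m m ℂ) * D * (↑u⁻¹ : Matrix m m ℂ)) p
      = (u : Matrix m m ℂ) * aeval D p * (↑u⁻¹ : Matrix m m ℂ) := by
  have h := aeval_algHom_apply (conjAlgHom u) D p
  rwa [conjAlgHom_apply, conjAlgHom_apply] at h

lemma divDiffPoly_mul (p : Polynomial ℂ) (lam : ℂ) :
    divDiffPoly p lam * (X - C lam) = p - C (p.eval lam) := by
  rw [divDiffPoly, mul_comm]
  exact EuclideanDomain.mul_div_cancel' (X_sub_C_ne_zero lam) (X_sub_C_dvd_sub_C_eval)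

lemma divDiffPoly_eq {q p : Polynomial ℂ} {lam : ℂ}
    (h : q * (X - C lam) = p - C (p.eval lam)) : divDiffPoly p lam = q :=
  mul_right_cancel₀ (X_sub_C_ne_zero lam) ((divDiffPoly_mul p lam).trans h.symm)

lemma divDiffPoly_C (a lam : ℂ) : divDiffPoly (C a) lam = 0 :=
  divDiffPoly_eq (by simp)

lemma divDiffPoly_add (p q : Polynomial ℂ) (lam : ℂ) :
    divDiffPoly (p + q) lam = divDiffPoly p lam + divDiffPoly q lam :=
  divDiffPoly_eq (by rw [add_mul, divDiffPoly_mul, divDiffPoly_mul]; simp; ring)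

lemma divDiffPoly_X_mul (p : Polynomial ℂ) (lam : ℂ) :
    divDiffPoly (X * p) lam = X * divDiffPoly p lam + C (p.eval lam) := by
  refine divDiffPoly_eq ?_
  have h := divDiffPoly_mul p lam
  have hc : C (lam * p.eval lam) = C lam * C (p.eval lam) := map_mul _ _ _
  simp only [eval_mul, eval_X]
  linear_combination X * h + hc

lemma key_lemma {d : ℕ} (H : Matrix (Fin (d+1)) (Fin (d+1)) ℂ) (r : Fin (d+1) → ℂ)
    (c : Fin (d+1) → ℂ) (Λ : Fin (d+1) → ℂ)
    (hs : ∀ q : Polynomial ℂ,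
      (aeval (H + vecMulVec r (Pi.single (Fin.last d) 1 : Fin (d+1) → ℂ)) q) (Fin.last d) 0
        = ∑ i, c i * q.eval (Λ i))
    (q : Polynomial ℂ) :
    (aeval (H + vecMulVec r (Pi.single (Fin.last d) 1 : Fin (d+1) → ℂ)) q).mulVec
        (Pi.single 0 1 : Fin (d+1) → ℂ)
      = (aeval H q).mulVec (Pi.single 0 1 : Fin (d+1) → ℂ)
        + (∑ i, c i • aeval H (divDiffPoly q (Λ i))).mulVec r := by
  set ed : Fin (d+1) → ℂ := Pi.single (Fin.last d) 1 with hed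
  set e1 : Fin (d+1) → ℂ := Pi.single 0 1 with he1
  set A : Matrix (Fin (d+1)) (Fin (d+1)) ℂ := H + vecMulVec r ed with hA
  -- rank one mulVec
  have hrank : ∀ v : Fin (d+1) → ℂ, (vecMulVec r ed).mulVec v = v (Fin.last d) • r := by
    intro v
    funext i
    simp [vecMulVec, mulVec, dotProduct, hed, Pi.single_apply, mul_comm, Finset.mul_sum]
  induction q using Polynomial.induction_on with
  | C a =>
      simp [divDiffPoly_C]
  | add p q hp hq =>
      simp only [map_add, divDiffPoly_add, smul_add, Finset.sum_add_distrib,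
        Matrix.add_mulVec, hp, hq]
      abel
  | monomial n a ih =>
      have hXmul : C a * X ^ (n + 1) = X * (C a * X ^ n) := by ring
      rw [hXmul]
      set p := C a * X ^ n with hp
      have hval := hs p
      have hAmul : ∀ w : Fin (d+1) → ℂ, A.mulVec w = H.mulVec w + w (Fin.last d) • r := by
        intro w
        rw [hA, Matrix.add_mulVec, hrank]
      have hsingle : ((aeval A p).mulVec e1) (Fin.last d) = ∑ i, c i * p.eval (Λ i) := by
        rw [← hval]
        simp [he1]
      have hL : (aeval A (X * p)).mulVec e1
          = H.mulVec ((aeval A p).mulVec e1) + (∑ i, c i * p.eval (Λ i)) • r := by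
        rw [_root_.map_mul, aeval_X, ← Matrix.mulVec_mulVec, hAmul, hsingle]
      have hconst : (∑ i, c i • (aeval H (C (p.eval (Λ i)))
            : Matrix (Fin (d+1)) (Fin (d+1)) ℂ)).mulVec r
          = (∑ i, c i * p.eval (Λ i)) • r := by
        simp only [aeval_C, Algebra.algebraMap_eq_smul_one, smul_smul]
        rw [← Finset.sum_smul, Matrix.smul_mulVec, Matrix.one_mulVec]
      have hR : (aeval H (X * p)).mulVec e1
            + (∑ i, c i • aeval H (divDiffPoly (X * p) (Λ i))).mulVec r
          = H.mulVec ((aeval H p).mulVec e1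
            + (∑ i, c i • aeval H (divDiffPoly p (Λ i))).mulVec r)
            + (∑ i, c i * p.eval (Λ i)) • r := by
        simp only [divDiffPoly_X_mul, map_add, _root_.map_mul, aeval_X, smul_add,
          Finset.sum_add_distrib, Matrix.add_mulVec, Matrix.mulVec_add,
          Matrix.mulVec_mulVec]
        rw [hconst, Finset.mul_sum]
        simp only [mul_smul_comm]
        abel
      rw [hL, ih, hR]

/-- **Corollary 6.3 (polynomial version): sketched vs. truncated approximation.**
If `H + r e_dᵀ = X Λ X⁻¹` is diagonalizable with `α_i = e_dᵀ X e_i`,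
`β_i = e_iᵀ X⁻¹ e₁`, then
`U p(H + r e_dᵀ) e₁ ‖b‖ - U p(H) e₁ ‖b‖ = U (∑ i α_i β_i p[H, λ_i]) r ‖b‖`.
(The paper's `d` is `d+1` here.) -/
theorem sketched_minus_truncated
    {n d : ℕ}
    (U : Matrix (Fin n) (Fin (d + 1)) ℝ) (b : Fin n → ℝ)
    (H : Matrix (Fin (d + 1)) (Fin (d + 1)) ℂ) (r : Fin (d + 1) → ℂ)
    (Xe : Matrix (Fin (d + 1)) (Fin (d + 1)) ℂ) (Λ : Fin (d + 1) → ℂ)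
    (hXe : IsUnit Xe.det)
    (hdiag : H + vecMulVec r (Pi.single (Fin.last d) 1 : Fin (d + 1) → ℂ)
      = Xe * diagonal Λ * Xe⁻¹)
    (p : Polynomial ℂ) :
    eunorm b • ((U.map Complex.ofReal).mulVec
        ((Polynomial.aeval
            (H + vecMulVec r (Pi.single (Fin.last d) 1 : Fin (d + 1) → ℂ)) p).mulVec
          (Pi.single 0 1 : Fin (d + 1) → ℂ)))
      - eunorm b • ((U.map Complex.ofReal).mulVec
        ((Polynomial.aeval H p).mulVec (Pi.single 0 1 : Fin (d + 1) → ℂ)))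
    = eunorm b • ((U.map Complex.ofReal).mulVec
        ((∑ i, (Xe (Fin.last d) i * Xe⁻¹ i 0) •
            Polynomial.aeval H (divDiffPoly p (Λ i))).mulVec r)) := by
  set ed : Fin (d+1) → ℂ := (Pi.single (Fin.last d) 1 : Fin (d + 1) → ℂ) with hed
  set A : Matrix (Fin (d+1)) (Fin (d+1)) ℂ := H + vecMulVec r ed with hA
  have hu : IsUnit Xe := (Matrix.isUnit_iff_isUnit_det Xe).mpr hXe
  have hcu : (hu.unit : Matrix (Fin (d+1)) (Fin (d+1)) ℂ) = Xe := hu.unit_spec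
  have hcuinv : (↑hu.unit⁻¹ : Matrix (Fin (d+1)) (Fin (d+1)) ℂ) = Xe⁻¹ := by
    rw [Matrix.coe_units_inv, hcu]
  have hs : ∀ q : Polynomial ℂ,
      (Polynomial.aeval A q) (Fin.last d) 0
        = ∑ i, (Xe (Fin.last d) i * Xe⁻¹ i 0) * q.eval (Λ i) := by
    intro q
    have hA' : A = (hu.unit : Matrix (Fin (d+1)) (Fin (d+1)) ℂ) * diagonal Λ
        * (↑hu.unit⁻¹ : Matrix (Fin (d+1)) (Fin (d+1)) ℂ) := by
      rw [hcu, hcuinv]; exact hdiag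
    rw [hA', _root_.aeval_conj, aeval_diag, hcu, hcuinv, Matrix.mul_apply]
    refine Finset.sum_congr rfl fun i _ => ?_
    rw [Matrix.mul_diagonal]
    ring
  have key := key_lemma H r (fun i => Xe (Fin.last d) i * Xe⁻¹ i 0) Λ hs p
  rw [← smul_sub, ← Matrix.mulVec_sub, key, add_sub_cancel_left]
end
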